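/- Let (A,B) be a valid tiling of [1,n] with first segment size k_s and first rift size k_r > 0. Then B contains the set B* = {x·k_s : x ∈ {0, 1, ..., k_r/k_s}}. -/
import Mathlib


open Finset Pointwise

/-- For a canonical valid tiling `(A,B)` of `[1,n]` with first segment size `k_s` and
first rift size `k_r > 0`, the set `B* = {x·k_s : 0 ≤ x ≤ k_r/k_s}` is contained in `B`. -/
theorem Bstar_subset_translations (n : ℕ) (hn : 0 < n) (A B : Finset ℤ)
    (hsum : A + B = Finset.Icc 1 (n : ℤ)) (hcard : A.card * B.card = n)
    (h0 : (0 : ℤ) ∈ B) (hpos : ∀ b ∈ B, 0 ≤ b) :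
    let Cc := Finset.Icc (1 : ℤ) (n : ℤ) \ A
    let s1 := A.filter (fun x => ∀ y ∈ Cc, x < y)
    let r1 := Cc.filter (fun x => ∀ y ∈ A \ s1, x < y)
    0 < r1.card →
      (Finset.range (r1.card / s1.card + 1)).image
          (fun x : ℕ => (x : ℤ) * (s1.card : ℤ)) ⊆ B := by
  intro Cc s1 r1 hr
  -- A is contained in [1,n]
  have hA_sub : ∀ a ∈ A, 1 ≤ a ∧ a ≤ (n : ℤ) := by
    intro a ha
    have : a ∈ A + B := by
      rw [Finset.mem_add]; exact ⟨a, ha, 0, h0, add_zero a⟩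
    rw [hsum, Finset.mem_Icc] at this; exact this
  -- uniqueness of representation
  have himg : (A ×ˢ B).image (fun p : ℤ × ℤ => p.1 + p.2) = A + B := rfl
  have hcards : ((A ×ˢ B).image (fun p : ℤ × ℤ => p.1 + p.2)).card = (A ×ˢ B).card := by
    rw [himg, hsum, Finset.card_product, Int.card_Icc, hcard]
    omega
  have hinj := Finset.injOn_of_card_image_eq hcards
  have huniq : ∀ a ∈ A, ∀ b ∈ B, ∀ a' ∈ A, ∀ b' ∈ B, a + b = a' + b' → a = a' ∧ b = b' := by
    intro a ha b hb a' ha' b' hb' h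
    have := hinj (by simp [Finset.mem_product, ha, hb] : ((a, b) : ℤ × ℤ) ∈ ↑(A ×ˢ B))
      (by simp [Finset.mem_product, ha', hb'] : ((a', b') : ℤ × ℤ) ∈ ↑(A ×ˢ B)) h
    exact ⟨congrArg Prod.fst this, congrArg Prod.snd this⟩
  -- 1 ∈ A
  have h1A : (1 : ℤ) ∈ A := by
    have h1 : (1 : ℤ) ∈ A + B := by
      rw [hsum, Finset.mem_Icc]; exact ⟨le_refl 1, by exact_mod_cast hn⟩
    rw [Finset.mem_add] at h1
    obtain ⟨a, ha, b, hb, hab⟩ := h1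
    have ha1 := (hA_sub a ha).1
    have hb0 := hpos b hb
    have : a = 1 := by omega
    rwa [this] at ha
  -- Cc is nonempty
  have hCc_ne : Cc.Nonempty := by
    obtain ⟨x, hx⟩ := Finset.card_pos.mp hr
    exact ⟨x, (Finset.mem_filter.mp hx).1⟩
  set c0 := Cc.min' hCc_ne with hc0_def
  have hc0_mem : c0 ∈ Cc := Finset.min'_mem _ _
  have hc0_le : ∀ y ∈ Cc, c0 ≤ y := fun y hy => Finset.min'_le _ _ hy
  have hc0_range : 1 ≤ c0 ∧ c0 ≤ (n : ℤ) ∧ c0 ∉ A := by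
    have := Finset.mem_sdiff.mp hc0_mem
    rw [Finset.mem_Icc] at this
    exact ⟨this.1.1, this.1.2, this.2⟩
  have hc0_2 : 2 ≤ c0 := by
    rcases hc0_range with ⟨h1, h2, h3⟩
    by_contra h
    have : c0 = 1 := by omega
    exact h3 (this ▸ h1A)
  -- s1 = Icc 1 (c0 - 1)
  have hIccA : ∀ x : ℤ, 1 ≤ x → x ≤ c0 - 1 → x ∈ A := by
    intro x h1 h2
    by_contra hx
    have : x ∈ Cc := by
      rw [Finset.mem_sdiff, Finset.mem_Icc]
      refine ⟨⟨h1, ?_⟩, hx⟩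
      rcases hc0_range with ⟨_, h2', _⟩
      omega
    have := hc0_le x this
    omega
  have hs1 : s1 = Finset.Icc 1 (c0 - 1) := by
    ext x
    constructor
    · intro hx
      rcases Finset.mem_filter.mp hx with ⟨hxA, hlt⟩
      rw [Finset.mem_Icc]
      have := hlt c0 hc0_mem
      exact ⟨(hA_sub x hxA).1, by omega⟩
    · intro hx
      rw [Finset.mem_Icc] at hx
      refine Finset.mem_filter.mpr ⟨hIccA x hx.1 hx.2, fun y hy => ?_⟩
      have := hc0_le y hy
      omega
  have hks : (s1.card : ℤ) = c0 - 1 := by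
    rw [hs1, Int.card_Icc]
    omega
  -- r1 is an interval Icc c0 m
  have hr1interval : ∃ m : ℤ, c0 - 1 ≤ m ∧ m ≤ (n : ℤ) ∧ r1 = Finset.Icc c0 m := by
    by_cases hAs : (A \ s1).Nonempty
    · set M := (A \ s1).min' hAs with hM_def
      have hM_mem := Finset.min'_mem _ hAs
      have hM_le : ∀ y ∈ A \ s1, M ≤ y := fun y hy => Finset.min'_le _ _ hy
      have hMA : M ∈ A := (Finset.mem_sdiff.mp hM_mem).1
      have hMn : M ≤ (n : ℤ) := (hA_sub M hMA).2
      have hMc0 : c0 ≤ M := by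
        have hns : M ∉ s1 := (Finset.mem_sdiff.mp hM_mem).2
        rw [hs1, Finset.mem_Icc] at hns
        have := (hA_sub M hMA).1
        omega
      refine ⟨M - 1, by omega, by omega, ?_⟩
      ext x
      constructor
      · intro hx
        rcases Finset.mem_filter.mp hx with ⟨hmem, hlt⟩
        rw [Finset.mem_Icc]
        have h1 := hc0_le x hmem
        have h2 := hlt M hM_mem
        omega
      · intro hx
        rw [Finset.mem_Icc] at hx
        have hxA : x ∉ A := by
          intro hxA
          have hxs1 : x ∉ s1 := by rw [hs1, Finset.mem_Icc]; omega
          have := hM_le x (Finset.mem_sdiff.mpr ⟨hxA, hxs1⟩)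
          omega
        have hxIn : x ∈ Finset.Icc (1 : ℤ) (n : ℤ) := by
          rw [Finset.mem_Icc]; omega
        refine Finset.mem_filter.mpr ⟨Finset.mem_sdiff.mpr ⟨hxIn, hxA⟩, fun y hy => ?_⟩
        have := hM_le y hy
        omega
    · -- A \ s1 is empty : r1 = Cc = Icc c0 n
      rw [Finset.not_nonempty_iff_eq_empty] at hAs
      have hACc : ∀ x : ℤ, x ∈ A → (1 ≤ x ∧ x ≤ c0 - 1) := by
        intro x hx
        have hxs1 : x ∈ s1 := by
          by_contra h
          have : x ∈ A \ s1 := Finset.mem_sdiff.mpr ⟨hx, h⟩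
          rw [hAs] at this; exact absurd this (Finset.notMem_empty x)
        rw [hs1, Finset.mem_Icc] at hxs1; exact hxs1
      refine ⟨(n : ℤ), by rcases hc0_range with ⟨_, h, _⟩; omega, le_refl _, ?_⟩
      ext x
      constructor
      · intro hx
        rcases Finset.mem_filter.mp hx with ⟨hmem, _⟩
        rcases Finset.mem_sdiff.mp hmem with ⟨hxIn, hxA⟩
        rw [Finset.mem_Icc] at hxIn ⊢
        have := hc0_le x hmem
        omega
      · intro hx
        rw [Finset.mem_Icc] at hx
        refine Finset.mem_filter.mpr ⟨Finset.mem_sdiff.mpr ⟨?_, ?_⟩, ?_⟩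
        · rw [Finset.mem_Icc]; omega
        · intro hxA
          have := hACc x hxA
          omega
        · intro y hy
          rw [hAs] at hy
          exact absurd hy (Finset.notMem_empty y)
  obtain ⟨m, hm1, hm2, hr1eq⟩ := hr1interval
  have hkr : (r1.card : ℤ) = m - c0 + 1 := by
    rw [hr1eq, Int.card_Icc]
    omega
  -- abbreviations
  set ks : ℤ := (s1.card : ℤ) with hks_def
  set kr : ℤ := (r1.card : ℤ) with hkr_def
  have hks_pos : 1 ≤ ks := by omega
  have hkskr_n : ks + kr ≤ (n : ℤ) := by omega
  -- no element of A lies in (ks, ks + kr]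
  have hA_gap : ∀ a ∈ A, ks < a → ks + kr < a := by
    intro a ha hlt
    by_contra h
    push_neg at h
    have har1 : a ∈ r1 := by
      rw [hr1eq, Finset.mem_Icc]
      omega
    rcases Finset.mem_filter.mp har1 with ⟨hmem, _⟩
    exact (Finset.mem_sdiff.mp hmem).2 ha
  have hIccA' : ∀ x : ℤ, 1 ≤ x → x ≤ ks → x ∈ A := by
    intro x h1 h2
    exact hIccA x h1 (by omega)
  -- the induction
  have key : ∀ x : ℕ, (x : ℤ) * ks ≤ kr → (x : ℤ) * ks ∈ B := by
    intro x
    induction x with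
    | zero => intro _; simpa using h0
    | succ x ih =>
      intro hle
      push_cast at hle ⊢
      have hx0 : (0 : ℤ) ≤ (x : ℤ) := Int.natCast_nonneg x
      have hexp : ((x : ℤ) + 1) * ks = (x : ℤ) * ks + ks := by ring
      have hxle : (x : ℤ) * ks ≤ kr := by linarith
      have hB : (x : ℤ) * ks ∈ B := ih hxle
      set v : ℤ := ((x : ℤ) + 1) * ks + 1 with hv_def
      have hv1 : 1 ≤ v := by
        nlinarith [mul_nonneg (by linarith : (0:ℤ) ≤ (x:ℤ) + 1) (by linarith : (0:ℤ) ≤ ks)]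
      have hvn : v ≤ (n : ℤ) := by linarith
      have hv_mem : v ∈ A + B := by rw [hsum, Finset.mem_Icc]; exact ⟨hv1, hvn⟩
      rw [Finset.mem_add] at hv_mem
      obtain ⟨a, ha, b, hb, hab⟩ := hv_mem
      have ha1 := (hA_sub a ha).1
      have hb0 := hpos b hb
      have haks : a ≤ ks := by
        by_contra hgt
        push_neg at hgt
        have := hA_gap a ha hgt
        linarith
      have hb_lb : (x : ℤ) * ks + 1 ≤ b := by linarith
      have hb_ub : b ≤ (x : ℤ) * ks + ks := by linarith
      by_cases hbeq : b = (x : ℤ) * ks + ks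
      · rw [hexp, ← hbeq]; exact hb
      · exfalso
        have hblt : b < (x : ℤ) * ks + ks := lt_of_le_of_ne hb_ub hbeq
        set a' : ℤ := b + 1 - (x : ℤ) * ks with ha'_def
        have ha'A : a' ∈ A := hIccA' a' (by linarith) (by linarith)
        have heq : a' + (x : ℤ) * ks = 1 + b := by rw [ha'_def]; ring
        have h1 := (huniq a' ha'A ((x : ℤ) * ks) hB 1 h1A b hb heq).1
        linarith
  -- conclude
  intro z hz
  rw [Finset.mem_image] at hz
  obtain ⟨x, hx, hxz⟩ := hz
  rw [Finset.mem_range] at hx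
  have hxle : x ≤ r1.card / s1.card := by omega
  have hs1pos : 0 < s1.card := by omega
  have hmul : x * s1.card ≤ r1.card := (Nat.le_div_iff_mul_le hs1pos).mp hxle
  have hZ : (x : ℤ) * ((s1.card : ℤ)) ≤ ((r1.card : ℤ)) := by exact_mod_cast hmul
  rw [← hks_def, ← hkr_def] at hZ
  have := key x hZ
  rw [← hxz]
  exact this
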